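/- Let f : F_q^n → ℂ, I ⊆ {1,...,n}, and let g^I_f(x,y) = ∑_{β ∈ Γ_I} f(β) y^{wt(β)} x^{|I| - wt(β)} be the local weight enumerator of f in the face Γ_I with respect to the zero vertex. Then g^I_f(x,y) = q^{-n} ∑_{β ∈ F_q^n} f̂(β) (x + (q-1)y)^{|I| - |I ∩ s(β)|} (x - y)^{|I ∩ s(β)|}, where f̂ is the Fourier transform of f. -/

import Mathlib

open Finset Matrix

noncomputable def xiq (q : ℕ) : ℂ := Complex.exp (2 * Real.pi * Complex.I / q)

/-- The character `φ^β(α) = ξ^{⟨α,β⟩}` on the q-ary Hamming space. -/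
noncomputable def chr (q n : ℕ) [NeZero q] (β α : Fin n → ZMod q) : ℂ :=
  xiq q ^ (∑ i, α i * β i : ZMod q).val

/-- Fourier transform `f̂(α) = ∑_β f(β) conj(ξ^{⟨α,β⟩})`. -/
noncomputable def ftr (q n : ℕ) [NeZero q] (f : (Fin n → ZMod q) → ℂ)
    (α : Fin n → ZMod q) : ℂ :=
  ∑ β : Fin n → ZMod q, f β * (starRingEnd ℂ) (chr q n β α)

/-- The face `Γ_I(α)` of the hypercube. -/
def face (q n : ℕ) [NeZero q] (I : Finset (Fin n)) (α : Fin n → ZMod q) :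
    Finset (Fin n → ZMod q) :=
  Finset.univ.filter (fun β => ∀ i ∉ I, β i = α i)

/-- The support `s(β)` of a vertex. -/
def supp (q n : ℕ) [NeZero q] (β : Fin n → ZMod q) : Finset (Fin n) :=
  Finset.univ.filter (fun i => β i ≠ 0)

set_option linter.unusedSectionVars false
section aux
variable (q : ℕ) [NeZero q]

noncomputable def ee (a : ZMod q) : ℂ := xiq q ^ a.val

lemma xiq_prim : IsPrimitiveRoot (xiq q) q :=
  Complex.isPrimitiveRoot_exp q (NeZero.ne q)

lemma xiq_pow_q : xiq q ^ q = 1 := (xiq_prim q).pow_eq_one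

variable {q}

lemma ee_zero : ee q 0 = 1 := by simp [ee]

lemma ee_add (a b : ZMod q) : ee q (a + b) = ee q a * ee q b := by
  rw [ee, ee, ee, ZMod.val_add, ← pow_eq_pow_mod _ (xiq_pow_q q), pow_add]

lemma ee_sum {ι : Type*} (s : Finset ι) (g : ι → ZMod q) :
    ee q (∑ i ∈ s, g i) = ∏ i ∈ s, ee q (g i) := by
  induction s using Finset.cons_induction with
  | empty => simp [ee_zero]
  | cons a s ha ih => rw [Finset.sum_cons, Finset.prod_cons, ee_add, ih]

lemma ee_mul (b c : ZMod q) : ee q (b * c) = ee q c ^ b.val := by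
  rw [ee, ee, ZMod.val_mul, ← pow_eq_pow_mod _ (xiq_pow_q q), ← pow_mul, mul_comm]

lemma char_sum (c : ZMod q) :
    ∑ b : ZMod q, ee q (b * c) = if c = 0 then (q : ℂ) else 0 := by
  split_ifs with hc
  · subst hc
    simp [ee_zero, ZMod.card]
  · have hη1 : ee q c ≠ 1 := by
      have := (xiq_prim q).pow_ne_one_of_pos_of_lt (ZMod.val_pos.mpr hc).ne' (ZMod.val_lt c)
      simpa [ee] using this
    have hηq : ee q c ^ q = 1 := by
      rw [ee, ← pow_mul, mul_comm, pow_mul, xiq_pow_q, one_pow]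
    have hre : ∑ b : ZMod q, ee q (b * c) = ∑ k ∈ Finset.range q, ee q c ^ k := by
      simp_rw [ee_mul]
      refine Finset.sum_nbij' (fun b => b.val) (fun k => (k : ZMod q)) ?_ ?_ ?_ ?_ ?_
      · intro a _; exact Finset.mem_range.mpr (ZMod.val_lt a)
      · intro k _; exact Finset.mem_univ _
      · intro a _; simp [ZMod.natCast_val, ZMod.cast_id]
      · intro k hk; exact ZMod.val_cast_of_lt (Finset.mem_range.mp hk)
      · intro a _; rfl
    rw [hre, geom_sum_eq hη1, hηq, sub_self, zero_div]

end aux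

lemma key (q n : ℕ) [NeZero q] (I : Finset (Fin n)) (x y : ℂ) (γ : Fin n → ZMod q) :
    ∑ β : Fin n → ZMod q, (starRingEnd ℂ) (chr q n γ β) *
      ((x + ((q:ℂ) - 1) * y) ^ (I.card - (I ∩ supp q n β).card) *
        (x - y) ^ (I ∩ supp q n β).card)
    = if γ ∈ face q n I 0 then
        (q:ℂ) ^ n * (x ^ (I.card - hammingDist γ (0 : Fin n → ZMod q)) *
          y ^ hammingDist γ (0 : Fin n → ZMod q))
      else 0 := by
  classical
  set A := x + ((q:ℂ) - 1) * y with hA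
  set B := x - y with hB
  -- the weight factor as a product over coordinates
  have hP : ∀ β : Fin n → ZMod q,
      A ^ (I.card - (I ∩ supp q n β).card) * B ^ (I ∩ supp q n β).card
      = ∏ i, (if i ∈ I then (if β i = 0 then A else B) else 1) := by
    intro β
    have h2 : (I.filter fun i => ¬ β i = 0) = I ∩ supp q n β := by
      ext i; simp [supp, Finset.mem_filter, Finset.mem_inter]
    have h1 : (I.filter fun i => β i = 0).card = I.card - (I ∩ supp q n β).card := by
      have := Finset.card_filter_add_card_filter_not (s := I) (p := fun i => β i = 0)
      rw [h2] at this; omega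
    rw [Finset.prod_ite_mem, Finset.univ_inter, Finset.prod_ite, Finset.prod_const,
      Finset.prod_const, h1, h2]
  -- summand as a product over coordinates
  have hsummand : ∀ β : Fin n → ZMod q,
      (starRingEnd ℂ) (chr q n γ β) *
        (A ^ (I.card - (I ∩ supp q n β).card) * B ^ (I ∩ supp q n β).card)
      = ∏ i, ((starRingEnd ℂ) (ee q (β i * γ i)) *
          (if i ∈ I then (if β i = 0 then A else B) else 1)) := by
    intro β
    rw [hP β, show chr q n γ β = ee q (∑ i, β i * γ i) from rfl, ee_sum, map_prod,
      Finset.prod_mul_distrib]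
  rw [Finset.sum_congr rfl fun β _ => hsummand β]
  rw [show (∑ β : Fin n → ZMod q,
      ∏ i : Fin n, (starRingEnd ℂ) (ee q (β i * γ i)) *
        (if i ∈ I then (if β i = 0 then A else B) else 1))
      = ∏ i : Fin n, ∑ b : ZMod q, (starRingEnd ℂ) (ee q (b * γ i)) *
        (if i ∈ I then (if b = 0 then A else B) else 1) from
    (Fintype.prod_sum (κ := fun _ : Fin n => ZMod q)
      (fun i b => (starRingEnd ℂ) (ee q (b * γ i)) *
        (if i ∈ I then (if b = 0 then A else B) else 1))).symm]
  -- per-coordinate sums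
  have hco : ∀ i : Fin n,
      ∑ b : ZMod q, (starRingEnd ℂ) (ee q (b * γ i)) *
          (if i ∈ I then (if b = 0 then A else B) else 1)
      = if i ∈ I then (if γ i = 0 then (q:ℂ) * x else (q:ℂ) * y)
        else (if γ i = 0 then (q:ℂ) else 0) := by
    intro i
    by_cases hi : i ∈ I <;> simp only [hi, if_true, if_false]
    · have hsplit : ∀ b : ZMod q, (starRingEnd ℂ) (ee q (b * γ i)) * (if b = 0 then A else B)
          = (starRingEnd ℂ) (ee q (b * γ i)) * B + (if b = 0 then A - B else 0) := by
        intro b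
        split_ifs with h
        · subst h; rw [zero_mul, ee_zero, _root_.map_one]; ring
        · ring
      rw [Finset.sum_congr rfl fun b _ => hsplit b, Finset.sum_add_distrib, ← Finset.sum_mul,
        ← map_sum, char_sum, Finset.sum_ite_eq' Finset.univ (0 : ZMod q) (fun _ => A - B)]
      rw [if_pos (Finset.mem_univ (0 : ZMod q))]
      split_ifs with h <;> simp only [map_natCast, map_zero] <;> rw [hA, hB] <;> ring
    · simp only [mul_one]
      rw [← map_sum, char_sum]
      split_ifs <;> simp
  rw [Finset.prod_congr rfl fun i _ => hco i]
  by_cases hγ : γ ∈ face q n I 0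
  · have hγ' : ∀ i ∉ I, γ i = 0 := by
      have := (Finset.mem_filter.mp hγ).2
      simpa using this
    rw [if_pos hγ, ← Finset.prod_mul_prod_compl I]
    have hIc : (∏ i ∈ Iᶜ, if i ∈ I then (if γ i = 0 then (q:ℂ) * x else (q:ℂ) * y)
        else (if γ i = 0 then (q:ℂ) else 0)) = (q:ℂ) ^ (n - I.card) := by
      rw [Finset.prod_congr rfl fun i hi => ?_, Finset.prod_const]
      · rw [Finset.card_compl, Fintype.card_fin]
      · have hni : i ∉ I := Finset.mem_compl.mp hi
        simp [hni, hγ' i hni]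
    have hd : hammingDist γ (0 : Fin n → ZMod q) = (I.filter fun i => ¬ γ i = 0).card := by
      unfold hammingDist
      congr 1
      ext i
      simp only [Finset.mem_filter, Finset.mem_univ, true_and, Pi.zero_apply, ne_eq]
      exact ⟨fun h => ⟨by by_contra hi; exact h (hγ' i hi), h⟩, fun h => h.2⟩
    have hI : (∏ i ∈ I, if i ∈ I then (if γ i = 0 then (q:ℂ) * x else (q:ℂ) * y)
        else (if γ i = 0 then (q:ℂ) else 0))
        = (q:ℂ) ^ I.card * (x ^ (I.card - hammingDist γ (0 : Fin n → ZMod q)) *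
            y ^ hammingDist γ (0 : Fin n → ZMod q)) := by
      have e1 : ∀ i ∈ I, (if i ∈ I then (if γ i = 0 then (q:ℂ) * x else (q:ℂ) * y)
          else (if γ i = 0 then (q:ℂ) else 0)) = (q:ℂ) * (if γ i = 0 then x else y) := by
        intro i hi
        simp only [hi, if_true]
        split_ifs <;> ring
      rw [Finset.prod_congr rfl e1, Finset.prod_mul_distrib, Finset.prod_const,
        Finset.prod_ite (fun _ => x) (fun _ => y), Finset.prod_const, Finset.prod_const, hd]
      have h1 : (I.filter fun i => γ i = 0).card = I.card - (I.filter fun i => ¬ γ i = 0).card := by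
        have := Finset.card_filter_add_card_filter_not (s := I) (p := fun i => γ i = 0)
        omega
      rw [h1]
    rw [hIc, hI]
    have hcard : I.card ≤ n := by
      simpa [Fintype.card_fin] using Finset.card_le_univ I
    have hqq : (q:ℂ) ^ I.card * (q:ℂ) ^ (n - I.card) = (q:ℂ) ^ n := by
      rw [← pow_add]; congr 1; omega
    rw [← hqq]; ring
  · rw [if_neg hγ]
    have : ∃ i, i ∉ I ∧ γ i ≠ 0 := by
      by_contra h
      push_neg at h
      exact hγ (Finset.mem_filter.mpr ⟨Finset.mem_univ _, fun i hi => by simpa using h i hi⟩)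
    obtain ⟨i, hi, hne⟩ := this
    refine Finset.prod_eq_zero (Finset.mem_univ i) ?_
    simp [hi, hne]


/-- Local weight enumerator `g^{I,α}_f(x,y)`. -/
noncomputable def lwe (q n : ℕ) [NeZero q] (f : (Fin n → ZMod q) → ℂ)
    (I : Finset (Fin n)) (α : Fin n → ZMod q) (x y : ℂ) : ℂ :=
  ∑ β ∈ face q n I α, f β * y ^ hammingDist β α * x ^ (I.card - hammingDist β α)

/-- `f` is an eigenfunction of the Hamming graph `H(n,q)` with eigenvalue `μ`. -/
def IsEigenfun (q n : ℕ) [NeZero q] (f : (Fin n → ZMod q) → ℂ) (μ : ℂ) : Prop :=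
  ∀ α, ∑ β ∈ Finset.univ.filter (fun β => hammingDist α β = 1), f β = μ * f α

/-- Adjacency matrix of the Hamming graph `H(n,q)`. -/
noncomputable def adjM (q n : ℕ) [NeZero q] :
    Matrix (Fin n → ZMod q) (Fin n → ZMod q) ℂ :=
  fun α β => if hammingDist α β = 1 then 1 else 0

/-- Vertex-color incidence matrix of a coloring `c`. -/
noncomputable def colM (q n r : ℕ) [NeZero q] (c : (Fin n → ZMod q) → Fin r) :
    Matrix (Fin n → ZMod q) (Fin r) ℂ :=
  fun α i => if c α = i then 1 else 0

theorem stmt_4 (q n : ℕ) [NeZero q] (hq : 2 ≤ q)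
    (f : (Fin n → ZMod q) → ℂ) (I : Finset (Fin n)) (x y : ℂ) :
    lwe q n f I 0 x y
      = ((q : ℂ) ^ n)⁻¹ * ∑ β : Fin n → ZMod q, ftr q n f β *
          (x + ((q : ℂ) - 1) * y) ^ (I.card - (I ∩ supp q n β).card) *
          (x - y) ^ (I ∩ supp q n β).card := by
  classical
  have hq0 : ((q:ℂ)) ^ n ≠ 0 := pow_ne_zero _ (Nat.cast_ne_zero.mpr (NeZero.ne q))
  have step1 : (∑ β : Fin n → ZMod q, ftr q n f β *
        (x + ((q:ℂ) - 1) * y) ^ (I.card - (I ∩ supp q n β).card) *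
        (x - y) ^ (I ∩ supp q n β).card)
      = ∑ γ : Fin n → ZMod q, f γ *
          (if γ ∈ face q n I 0 then
            (q:ℂ) ^ n * (x ^ (I.card - hammingDist γ (0 : Fin n → ZMod q)) *
              y ^ hammingDist γ (0 : Fin n → ZMod q))
          else 0) := by
    simp only [ftr, Finset.sum_mul, mul_assoc]
    rw [Finset.sum_comm]
    refine Finset.sum_congr rfl fun γ _ => ?_
    rw [← Finset.mul_sum, key q n I x y γ]
  rw [step1, Finset.mul_sum]
  have step2 : ∀ γ : Fin n → ZMod q,
      ((q:ℂ) ^ n)⁻¹ * (f γ * (if γ ∈ face q n I 0 then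
          (q:ℂ) ^ n * (x ^ (I.card - hammingDist γ (0 : Fin n → ZMod q)) *
            y ^ hammingDist γ (0 : Fin n → ZMod q))
        else 0))
      = if γ ∈ face q n I 0 then
          f γ * y ^ hammingDist γ (0 : Fin n → ZMod q) *
            x ^ (I.card - hammingDist γ (0 : Fin n → ZMod q))
        else 0 := by
    intro γ
    split_ifs with h
    · rw [show ((q:ℂ) ^ n)⁻¹ * (f γ * ((q:ℂ) ^ n *
          (x ^ (I.card - hammingDist γ (0 : Fin n → ZMod q)) *
            y ^ hammingDist γ (0 : Fin n → ZMod q))))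
        = (((q:ℂ) ^ n)⁻¹ * (q:ℂ) ^ n) * (f γ * y ^ hammingDist γ (0 : Fin n → ZMod q) *
            x ^ (I.card - hammingDist γ (0 : Fin n → ZMod q))) from by ring,
        inv_mul_cancel₀ hq0, one_mul]
    · simp
  rw [Finset.sum_congr rfl fun γ _ => step2 γ, Finset.sum_ite_mem, Finset.univ_inter]
  rfl
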